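/- Let D be a triangulated category with a dualizable pre-exceptional collection (\nabla_s, \Delta_s, \iota_s)_{s \in S} as above. Then for each s there are natural isomorphisms Hom(\Delta_s, \Delta_s[i]) \cong Hom(\Delta_s, \nabla_s[i]) \cong Hom(\nabla_s, \nabla_s[i]) for all i \in \mathbb{Z}, induced by composition with \iota_s. -/

import Mathlib

open CategoryTheory Limits Pretriangulated

variable {C : Type*} [Category C] [Preadditive C] [HasZeroObject C] [HasShift C ℤ]
  [∀ n : ℤ, (shiftFunctor C n).Additive] [Pretriangulated C]

/-- `TriaGen B X` says `X` lies in the smallest triangulated subcategory of `C` containing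
the objects satisfying `B` (closed under isomorphisms, zero objects, shifts and cones). -/
def TriaGen (B : C → Prop) (X : C) : Prop :=
  ∀ P : C → Prop,
    (∀ {Y Z : C}, (Y ≅ Z) → P Y → P Z) →
    (∀ Y : C, IsZero Y → P Y) →
    (∀ (Y : C) (n : ℤ), P Y → P (Y⟦n⟧)) →
    (∀ T : Triangle C, (T ∈ distTriang C) → P T.obj₁ → P T.obj₂ → P T.obj₃) →
    (∀ Y : C, B Y → P Y) → P X

/-- If all maps `A ⟶ X⟦i⟧` vanish, then so do all maps `A ⟶ X⟦a⟧⟦b⟧`. -/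
lemma hom_to_shift_shift_zero {A X : C} (h : ∀ (i : ℤ) (f : A ⟶ X⟦i⟧), f = 0)
    (a b : ℤ) (f : A ⟶ (X⟦a⟧)⟦b⟧) : f = 0 := by
  have h0 : f ≫ (shiftFunctorAdd C a b).inv.app X = 0 := h (a + b) _
  calc f = (f ≫ (shiftFunctorAdd C a b).inv.app X) ≫ (shiftFunctorAdd C a b).hom.app X := by
        simp
    _ = 0 := by rw [h0]; simp

/-- If all maps `X ⟶ B⟦i⟧` vanish, then so do all maps `X⟦n⟧ ⟶ B⟦i⟧`. -/
lemma shift_dom_hom_zero {X B : C} (h : ∀ (i : ℤ) (f : X ⟶ B⟦i⟧), f = 0)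
    (n i : ℤ) (f : X⟦n⟧ ⟶ B⟦i⟧) : f = 0 := by
  apply (shiftFunctor C (-n)).map_injective
  rw [Functor.map_zero]
  have h0 : (shiftFunctorCompIsoId C n (-n) (by ring)).inv.app X ≫
      (shiftFunctor C (-n)).map f ≫ (shiftFunctorAdd C i (-n)).inv.app B = 0 := h _ _
  calc (shiftFunctor C (-n)).map f
      = (shiftFunctorCompIsoId C n (-n) (by ring)).hom.app X ≫
          ((shiftFunctorCompIsoId C n (-n) (by ring)).inv.app X ≫
            (shiftFunctor C (-n)).map f ≫ (shiftFunctorAdd C i (-n)).inv.app B) ≫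
          (shiftFunctorAdd C i (-n)).hom.app B := by simp
    _ = 0 := by rw [h0]; simp

/-- Covariant vanishing propagates through `TriaGen` provided
`Hom(A, -⟦i⟧)` vanishes on generators. -/
lemma triaGen_covariant_vanish {B : C → Prop} {A : C} {X : C} (hX : TriaGen B X)
    (hbase : ∀ Y : C, B Y → ∀ (i : ℤ) (f : A ⟶ Y⟦i⟧), f = 0) :
    ∀ (i : ℤ) (f : A ⟶ X⟦i⟧), f = 0 := by
  refine hX (fun Z => ∀ (i : ℤ) (f : A ⟶ Z⟦i⟧), f = 0) ?_ ?_ ?_ ?_ hbase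
  · intro Y Z e hY i f
    calc f = (f ≫ (shiftFunctor C i).map e.inv) ≫ (shiftFunctor C i).map e.hom := by
          simp [← Functor.map_comp]
      _ = 0 := by rw [hY i (f ≫ (shiftFunctor C i).map e.inv)]; simp
  · intro Y hY i f
    exact (((shiftFunctor C i).map_isZero hY).eq_of_tgt f 0).trans rfl
  · intro Y n hY i f
    exact hom_to_shift_shift_zero hY n i f
  · intro T hT hT₁ hT₂ i f
    have hT' := Triangle.shift_distinguished T hT i
    have hf : f ≫ ((Triangle.shiftFunctor C i).obj T).mor₃ = 0 :=
      hom_to_shift_shift_zero hT₁ i 1 _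
    obtain ⟨g, hg⟩ := Triangle.coyoneda_exact₃ _ hT' f hf
    rw [hg, hT₂ i g]; exact zero_comp

/-- Contravariant vanishing propagates through `TriaGen` provided
`Hom(-, N⟦i⟧)` vanishes on generators. -/
lemma triaGen_contravariant_vanish {B : C → Prop} {N : C} {X : C} (hX : TriaGen B X)
    (hbase : ∀ Y : C, B Y → ∀ (i : ℤ) (f : Y ⟶ N⟦i⟧), f = 0) :
    ∀ (i : ℤ) (f : X ⟶ N⟦i⟧), f = 0 := by
  refine hX (fun Z => ∀ (i : ℤ) (f : Z ⟶ N⟦i⟧), f = 0) ?_ ?_ ?_ ?_ hbase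
  · intro Y Z e hY i f
    calc f = e.inv ≫ (e.hom ≫ f) := by simp
      _ = 0 := by rw [hY i (e.hom ≫ f)]; simp
  · intro Y hY i f
    exact (hY.eq_of_src f 0).trans rfl
  · intro Y n hY i f
    exact shift_dom_hom_zero hY n i f
  · intro T hT hT₁ hT₂ i f
    have hf : T.mor₂ ≫ f = 0 := hT₂ i _
    obtain ⟨g, hg⟩ := Triangle.yoneda_exact₃ _ hT f hf
    rw [hg, shift_dom_hom_zero hT₁ 1 i g, comp_zero]

/-- For a dualizable pre-exceptional collection `(∇_s, Δ_s, ι_s)`, composition with `ι_s`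
induces isomorphisms `Hom(Δ_s, Δ_s[i]) ≅ Hom(Δ_s, ∇_s[i]) ≅ Hom(∇_s, ∇_s[i])` for all
`i ∈ ℤ`. -/
theorem delta_nabla_end_iso
    {σ : Type*} [PartialOrder σ] (nabla Delta : σ → C) (ι : ∀ s : σ, Delta s ⟶ nabla s)
    (hfin : ∀ s : σ, {t : σ | t ≤ s}.Finite)
    (h₁ : ∀ s t : σ, ¬ t ≤ s → ∀ (i : ℤ) (f : nabla s ⟶ (nabla t)⟦i⟧), f = 0)
    (hcone : ∀ s : σ, ∃ (K : C) (g : nabla s ⟶ K) (h : K ⟶ (Delta s)⟦(1 : ℤ)⟧),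
      (Triangle.mk (ι s) g h ∈ distTriang C) ∧
        TriaGen (fun Y => ∃ u : σ, u < s ∧ Y = nabla u) K)
    (horth : ∀ s t : σ, t < s → ∀ (i : ℤ) (f : Delta s ⟶ (nabla t)⟦i⟧), f = 0)
    : ∀ (s : σ) (i : ℤ),
      Function.Bijective
        (fun f : Delta s ⟶ (Delta s)⟦i⟧ => f ≫ (shiftFunctor C i).map (ι s)) ∧
      Function.Bijective
        (fun f : nabla s ⟶ (nabla s)⟦i⟧ => ι s ≫ f) := by
  intro s i
  obtain ⟨K, g, h, hdist, hK⟩ := hcone s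
  set T : Triangle C := Triangle.mk (ι s) g h with hT
  -- Hom(Δ_s, K⟦i⟧) = 0
  have hcov : ∀ (j : ℤ) (f : Delta s ⟶ K⟦j⟧), f = 0 :=
    triaGen_covariant_vanish hK (by
      rintro Y ⟨u, hu, rfl⟩ j f
      exact horth s u hu j f)
  -- Hom(K, ∇_s⟦i⟧) = 0
  have hcontra : ∀ (j : ℤ) (f : K ⟶ (nabla s)⟦j⟧), f = 0 :=
    triaGen_contravariant_vanish hK (by
      rintro Y ⟨u, hu, rfl⟩ j f
      exact h₁ u s (not_le_of_gt hu) j f)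
  constructor
  · -- Delta side, via the shifted triangle
    have hTl := Triangle.shift_distinguished T hdist i
    set Tl : Triangle C := (CategoryTheory.shiftFunctor (Triangle C) i).obj T with hTldef
    have e1 : Tl.mor₁ = (i.negOnePow : ℤˣ) • (shiftFunctor C i).map (ι s) := rfl
    have e2 : Tl.mor₂ = (i.negOnePow : ℤˣ) • (shiftFunctor C i).map g := rfl
    constructor
    · intro f₁ f₂ hf
      dsimp at hf
      have key : (f₁ - f₂) ≫ Tl.mor₁ = 0 := by
        change (f₁ - f₂) ≫ ((i.negOnePow : ℤˣ) • (shiftFunctor C i).map (ι s)) = 0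
        rw [Linear.comp_units_smul, Preadditive.sub_comp, sub_eq_zero.mpr hf, smul_zero]
      obtain ⟨w, hw⟩ := Triangle.coyoneda_exact₂ _ (inv_rot_of_distTriang _ hTl)
        (f₁ - f₂) key
      have hw0 : w = 0 := hom_to_shift_shift_zero hcov i (-1) w
      have : f₁ - f₂ = 0 := by rw [hw, hw0, zero_comp]; exact rfl
      exact sub_eq_zero.mp this
    · intro φ
      have hφ : φ ≫ Tl.mor₂ = 0 := by
        change φ ≫ ((i.negOnePow : ℤˣ) • (shiftFunctor C i).map g) = 0
        rw [Linear.comp_units_smul, hcov i (φ ≫ (shiftFunctor C i).map g), smul_zero]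
      obtain ⟨f, hf⟩ := Triangle.coyoneda_exact₂ _ hTl φ hφ
      refine ⟨(i.negOnePow : ℤˣ) • f, ?_⟩
      have hf' : φ = (f : Delta s ⟶ (Delta s)⟦i⟧) ≫ ((i.negOnePow : ℤˣ) • (shiftFunctor C i).map (ι s)) := hf
      change ((i.negOnePow : ℤˣ) • (f : Delta s ⟶ (Delta s)⟦i⟧)) ≫ (shiftFunctor C i).map (ι s) = φ
      exact ((Linear.units_smul_comp _ _ _).trans (Linear.comp_units_smul _ _ _).symm).trans hf'.symm
  · constructor
    · intro f₁ f₂ hf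
      dsimp at hf
      have key : T.mor₁ ≫ (f₁ - f₂) = 0 := by
        change ι s ≫ (f₁ - f₂) = 0
        rw [Preadditive.comp_sub, sub_eq_zero]
        exact hf
      obtain ⟨w, hw⟩ := Triangle.yoneda_exact₂ _ hdist (f₁ - f₂) key
      have hw0 : w = 0 := hcontra i w
      have : f₁ - f₂ = 0 := by rw [hw, hw0, comp_zero]; exact rfl
      exact sub_eq_zero.mp this
    · intro φ
      have hφ : (T.invRotate).mor₁ ≫ φ = 0 :=
        shift_dom_hom_zero hcontra (-1) i _
      obtain ⟨f, hf⟩ := Triangle.yoneda_exact₂ _ (inv_rot_of_distTriang _ hdist) φ hφ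
      exact ⟨f, hf.symm⟩
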